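/- Let D be a unital associative real algebra endowed with a division grading D = ⊕_{g∈G} D_g by an abelian group G (i.e., every nonzero homogeneous element of D is invertible). Let X be an invertible element of D such that the inner automorphism Int(X) : Y ↦ X Y X⁻¹ maps D_g into D_g for every g ∈ G. Then there exists a nonzero homogeneous element X₀ ∈ D such that X Y X⁻¹ = X₀ Y X₀⁻¹ for all Y ∈ D. -/

import Mathlib

/-- Let `D` be a unital associative real algebra with a division grading
`D = ⊕_{g ∈ G} D_g` by an abelian group `G` (every nonzero homogeneous element is
invertible).  If `X ∈ Dˣ` is such that `Int(X) : Y ↦ X Y X⁻¹` maps each `D_g` into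
itself, then there is a nonzero homogeneous `X₀` (a homogeneous unit) such that
`X Y X⁻¹ = X₀ Y X₀⁻¹` for all `Y ∈ D`. -/
theorem stmt9 {G : Type*} [AddCommGroup G] [DecidableEq G]
    {D : Type*} [Ring D] [Algebra ℝ D]
    (𝒜 : G → Submodule ℝ D) [GradedAlgebra 𝒜]
    (hdiv : ∀ (g : G) (x : D), x ∈ 𝒜 g → x ≠ 0 → IsUnit x)
    (X : Dˣ) (hX : ∀ (g : G), ∀ y ∈ 𝒜 g, (X : D) * y * ((X⁻¹ : Dˣ) : D) ∈ 𝒜 g) :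
    ∃ X₀ : Dˣ, (∃ g : G, (X₀ : D) ∈ 𝒜 g) ∧
      ∀ Y : D, (X : D) * Y * ((X⁻¹ : Dˣ) : D) = (X₀ : D) * Y * ((X₀⁻¹ : Dˣ) : D) := by
  classical
  by_cases hD : (X : D) = 0
  · have h1 : (1 : D) = 0 := by
      have := X.mul_inv
      rw [hD, zero_mul] at this
      exact this.symm
    have hall : ∀ x : D, x = 0 := fun x => by
      calc x = 1 * x := (one_mul x).symm
      _ = 0 := by rw [h1, zero_mul]
    exact ⟨1, ⟨0, SetLike.one_mem_graded 𝒜⟩, fun Y => by rw [hall ((X : D) * Y * _), hall ((1 : Dˣ) * Y * _)]⟩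
  · obtain ⟨g, hg⟩ : ∃ g, (DirectSum.decompose 𝒜 (X : D) g : D) ≠ 0 := by
      by_contra h
      push_neg at h
      apply hD
      rw [← DirectSum.sum_support_decompose 𝒜 (X : D)]
      exact Finset.sum_eq_zero fun i _ => h i
    set a : D := (DirectSum.decompose 𝒜 (X : D) g : D) with ha_def
    have ha_mem : a ∈ 𝒜 g := SetLike.coe_mem _
    obtain ⟨X₀, hX₀⟩ := hdiv g a ha_mem hg
    refine ⟨X₀, ⟨g, hX₀ ▸ ha_mem⟩, ?_⟩
    -- key: for homogeneous y, a * y = (X y X⁻¹) * a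
    have key : ∀ (h : G) (y : D), y ∈ 𝒜 h →
        (X : D) * y * ((X⁻¹ : Dˣ) : D) = (X₀ : D) * y * ((X₀⁻¹ : Dˣ) : D) := by
      intro h y hy
      set z : D := (X : D) * y * ((X⁻¹ : Dˣ) : D) with hz_def
      have hz : z ∈ 𝒜 h := hX h y hy
      have hXy : (X : D) * y = z * (X : D) := by
        rw [hz_def, Units.inv_mul_cancel_right]
      have hcomp : a * y = z * a := by
        have h1 : (DirectSum.decompose 𝒜 ((X : D) * y) (g + h) : D) = a * y :=
          DirectSum.coe_decompose_mul_add_of_right_mem 𝒜 hy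
        have h2 : (DirectSum.decompose 𝒜 (z * (X : D)) (h + g) : D) = z * a :=
          DirectSum.coe_decompose_mul_add_of_left_mem 𝒜 hz
        rw [← h1, ← h2, hXy, add_comm]
      have : z * (X₀ : D) = (X₀ : D) * y := by rw [hX₀, ← hcomp]
      rw [hz_def] at this ⊢
      rw [← this, Units.mul_inv_cancel_right]
    intro Y
    induction Y using DirectSum.Decomposition.inductionOn 𝒜 with
    | zero => simp
    | homogeneous y => exact key _ y.1 y.2
    | add x y hx hy => rw [mul_add, add_mul, hx, hy, mul_add, add_mul]
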